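/- Let k ≥ 3, r ≥ 1, and α be integers with 0 ≤ α ≤ rk − 1, and let m ∈ [1, k] be the integer with (m−1)r ≤ α < mr. Let A be a set of k distinct integers with 0 ∈ A, and let 𝒜 be the multiset consisting of each element of A with multiplicity exactly r. Then |Σ_α(𝒜)| ≥ r(⌊k²/4⌋ − m(m−1)/2) + 1; equivalently, |Σ_α(𝒜)| ≥ r((k²−1)/4 − m(m−1)/2) + 1 if k is odd and |Σ_α(𝒜)| ≥ r(k²/4 − m(m−1)/2) + 1 if k is even. -/

import Mathlib

/-- `sigmaSeqAtLeast A r α` is the set of all subsequence sums of the multiset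
consisting of each element of `A` with multiplicity `r`, coming from
submultisets with at least `α` terms. -/
def sigmaSeqAtLeast (A : Finset ℤ) (r α : ℕ) : Finset ℤ :=
  (((r • A.val).powerset.filter (fun B => α ≤ Multiset.card B)).map
    Multiset.sum).toFinset

namespace Stmt19

def Wlow (A : Finset ℤ) (r β : ℕ) : Finset ℤ :=
  (((r • A.val).powerset.filter (fun B => Multiset.card B ≤ β)).map
    Multiset.sum).toFinset

lemma mem_Wlow {A : Finset ℤ} {r β : ℕ} {x : ℤ} :
    x ∈ Wlow A r β ↔ ∃ B, B ≤ r • A.val ∧ Multiset.card B ≤ β ∧ B.sum = x := by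
  simp only [Wlow, Multiset.mem_toFinset, Multiset.mem_map, Multiset.mem_filter,
    Multiset.mem_powerset]
  constructor
  · rintro ⟨B, ⟨h1, h2⟩, h3⟩; exact ⟨B, h1, h2, h3⟩
  · rintro ⟨B, h1, h2, h3⟩; exact ⟨B, ⟨h1, h2⟩, h3⟩

lemma mem_sigma {A : Finset ℤ} {r α : ℕ} {x : ℤ} :
    x ∈ sigmaSeqAtLeast A r α ↔ ∃ B, B ≤ r • A.val ∧ α ≤ Multiset.card B ∧ B.sum = x := by
  simp only [sigmaSeqAtLeast, Multiset.mem_toFinset, Multiset.mem_map, Multiset.mem_filter,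
    Multiset.mem_powerset]
  constructor
  · rintro ⟨B, ⟨h1, h2⟩, h3⟩; exact ⟨B, h1, h2, h3⟩
  · rintro ⟨B, h1, h2, h3⟩; exact ⟨B, ⟨h1, h2⟩, h3⟩

lemma card_Wlow_le {A : Finset ℤ} {r α β : ℕ} (hβ : β = r * A.card - α)
    (hα : α ≤ r * A.card) :
    (Wlow A r β).card ≤ (sigmaSeqAtLeast A r α).card := by
  classical
  set M := r • A.val with hM
  have hcM : Multiset.card M = r * A.card := by
    rw [hM, Multiset.card_nsmul]; rfl
  have hsub : (Wlow A r β).image (fun x => M.sum - x) ⊆ sigmaSeqAtLeast A r α := by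
    intro y hy
    simp only [Finset.mem_image] at hy
    obtain ⟨x, hx, rfl⟩ := hy
    obtain ⟨B, hB, hcard, rfl⟩ := mem_Wlow.mp hx
    refine mem_sigma.mpr ⟨M - B, tsub_le_self, ?_, ?_⟩
    · have hcs : Multiset.card (M - B) = Multiset.card M - Multiset.card B :=
        Multiset.card_sub hB
      have hBM : Multiset.card B ≤ Multiset.card M := Multiset.card_le_card hB
      omega
    · have h := tsub_add_cancel_of_le hB
      have h2 := congrArg Multiset.sum h
      rw [Multiset.sum_add] at h2
      linarith
  calc (Wlow A r β).card = ((Wlow A r β).image (fun x => M.sum - x)).card := by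
        rw [Finset.card_image_of_injective _ sub_right_injective]
    _ ≤ _ := Finset.card_le_card hsub

lemma sum_mem_Wlow {A : Finset ℤ} {r β k : ℕ} (a : ℕ → ℤ)
    (hmem : ∀ u, u < k → a u ∈ A)
    (hinj : ∀ u v, u < k → v < k → a u = a v → u = v)
    (g : ℕ → ℕ) (hg : ∀ u, g u ≤ r) (hgs : ∑ u ∈ Finset.range k, g u ≤ β) :
    (∑ u ∈ Finset.range k, (g u : ℤ) * a u) ∈ Wlow A r β := by
  classical
  refine mem_Wlow.mpr ⟨(Finset.range k).val.bind (fun u => Multiset.replicate (g u) (a u)),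
    ?_, ?_, ?_⟩
  · rw [Multiset.le_iff_count]
    intro x
    rw [Multiset.count_bind]
    have hcount : ∀ u : ℕ, Multiset.count x (Multiset.replicate (g u) (a u))
        = if a u = x then g u else 0 := fun u => Multiset.count_replicate ..
    by_cases hx : ∃ u, u < k ∧ a u = x
    · obtain ⟨u0, hu0, hxu⟩ := hx
      have hsum : ((Finset.range k).val.map
          (fun u => Multiset.count x (Multiset.replicate (g u) (a u)))).sum
          = ∑ u ∈ Finset.range k, (if a u = x then g u else 0) := by
        simp only [hcount]; rfl
      rw [hsum]
      have : ∑ u ∈ Finset.range k, (if a u = x then g u else 0) = g u0 := by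
        rw [Finset.sum_eq_single u0]
        · simp [hxu]
        · intro b hb hne
          have hbk : b < k := Finset.mem_range.mp hb
          rw [if_neg]
          intro hxb
          exact hne (hinj b u0 hbk hu0 (hxb.trans hxu.symm))
        · intro h; exact absurd (Finset.mem_range.mpr hu0) h
      rw [this]
      have hxA : x ∈ A := hxu ▸ hmem u0 hu0
      have h1 : 1 ≤ Multiset.count x A.val := Multiset.one_le_count_iff_mem.mpr hxA
      have : Multiset.count x (r • A.val) = r * Multiset.count x A.val := by
        rw [Multiset.count_nsmul]
      rw [this]
      calc g u0 ≤ r := hg u0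
        _ = r * 1 := (mul_one r).symm
        _ ≤ r * Multiset.count x A.val := Nat.mul_le_mul_left r h1
    · have hsum : ((Finset.range k).val.map
          (fun u => Multiset.count x (Multiset.replicate (g u) (a u)))).sum
          = ∑ u ∈ Finset.range k, (if a u = x then g u else 0) := by
        simp only [hcount]; rfl
      rw [hsum]
      have hz : ∑ u ∈ Finset.range k, (if a u = x then g u else 0) = 0 := by
        apply Finset.sum_eq_zero
        intro u hu
        rw [if_neg]
        intro hxa
        exact hx ⟨u, Finset.mem_range.mp hu, hxa⟩
      rw [hz]
      exact Nat.zero_le _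
  · have hcb : Multiset.card ((Finset.range k).val.bind
        fun u => Multiset.replicate (g u) (a u)) = ∑ u ∈ Finset.range k, g u := by
      rw [Multiset.card_bind]
      simp only [Function.comp_def, Multiset.card_replicate]
      rfl
    rw [hcb]; exact hgs
  · rw [Multiset.sum_bind]
    have hrep : ∀ u : ℕ, (Multiset.replicate (g u) (a u)).sum = (g u : ℤ) * a u := by
      intro u
      rw [Multiset.sum_replicate, nsmul_eq_mul]
    simp only [hrep]
    rfl



def Tseg (tt : ℕ) (v : ℕ → ℤ) (j : ℕ) : ℤ := ∑ u ∈ Finset.Ico (tt - j) tt, v u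

variable {r β tt : ℕ} {v : ℕ → ℤ}

def sigmaFn (r β tt : ℕ) (j : ℕ) : ℕ :=
  if j = tt then (if r * tt ≤ β then 1 else 0)
  else if r * (j + 1) ≤ β then r * (tt - j) else min (r * (tt - j)) (β + 1 - r * j)

def chainG (r tt : ℕ) (v : ℕ → ℤ) (q : ℕ × ℕ) : ℤ :=
  (r : ℤ) * Tseg tt v q.1 + ((q.2 / (tt - q.1) : ℕ) : ℤ) * v (tt - 1 - q.1) +
    (if q.2 % (tt - q.1) = 0 then 0 else v (q.2 % (tt - q.1) - 1))

variable {r β tt : ℕ} {v : ℕ → ℤ}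

lemma Tseg_nonneg (hvpos : ∀ i, i < tt → 0 < v i) (j : ℕ) : 0 ≤ Tseg tt v j := by
  apply Finset.sum_nonneg
  intro u hu
  exact (hvpos u (Finset.mem_Ico.mp hu).2).le

lemma Tseg_mono (hvpos : ∀ i, i < tt → 0 < v i) {j j' : ℕ} (h : j ≤ j') :
    Tseg tt v j ≤ Tseg tt v j' := by
  apply Finset.sum_le_sum_of_subset_of_nonneg
  · apply Finset.Ico_subset_Ico_left
    omega
  · intro u hu _
    exact (hvpos u (Finset.mem_Ico.mp hu).2).le

lemma Tseg_succ {j : ℕ} (hj : j < tt) :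
    Tseg tt v (j + 1) = v (tt - 1 - j) + Tseg tt v j := by
  unfold Tseg
  have h1 : tt - (j + 1) = tt - 1 - j := by omega
  have h2 : tt - 1 - j < tt := by omega
  have h3 : tt - 1 - j + 1 = tt - j := by omega
  rw [h1, Finset.sum_eq_sum_Ico_succ_bot h2, h3]

lemma sigmaFn_le {j : ℕ} (hj : j < tt) : sigmaFn r β tt j ≤ r * (tt - j) := by
  unfold sigmaFn
  rw [if_neg (by omega : ¬ j = tt)]
  split_ifs <;> simp [min_le_left]

lemma sigmaFn_tt_le_one (r β tt : ℕ) : sigmaFn r β tt tt ≤ 1 := by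
  unfold sigmaFn
  rw [if_pos rfl]
  split_ifs <;> omega

lemma lad_lt_vc (hvpos : ∀ i, i < tt → 0 < v i)
    (hvmono : ∀ i j, i < j → j < tt → v i < v j)
    {j i : ℕ} (hjlt : j < tt) (hi : i < tt - j) :
    (if i = 0 then (0 : ℤ) else v (i - 1)) < v (tt - 1 - j) := by
  split_ifs with h
  · exact hvpos _ (by omega)
  · exact hvmono _ _ (by omega) (by omega)

lemma chainG_lt_top (hvpos : ∀ i, i < tt → 0 < v i)
    (hvmono : ∀ i j, i < j → j < tt → v i < v j)
    {j w : ℕ} (hj : j < tt) (hw : w < r * (tt - j)) :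
    chainG r tt v (j, w) < (r : ℤ) * Tseg tt v (j + 1) := by
  have hd : 0 < tt - j := by omega
  have hvc : 0 < v (tt - 1 - j) := hvpos _ (by omega)
  have hpr : w / (tt - j) < r := (Nat.div_lt_iff_lt_mul hd).mpr (by omega)
  have hlad : (if w % (tt - j) = 0 then (0 : ℤ) else v (w % (tt - j) - 1)) < v (tt - 1 - j) :=
    lad_lt_vc hvpos hvmono hj (Nat.mod_lt _ hd)
  have hprz : ((w / (tt - j) : ℕ) : ℤ) + 1 ≤ (r : ℤ) := by exact_mod_cast hpr
  have key : ((w / (tt - j) : ℕ) : ℤ) * v (tt - 1 - j) +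
      (if w % (tt - j) = 0 then (0 : ℤ) else v (w % (tt - j) - 1)) < (r : ℤ) * v (tt - 1 - j) := by
    have h1 : ((w / (tt - j) : ℕ) : ℤ) * v (tt - 1 - j) + v (tt - 1 - j)
        = (((w / (tt - j) : ℕ) : ℤ) + 1) * v (tt - 1 - j) := by ring
    have h2 : (((w / (tt - j) : ℕ) : ℤ) + 1) * v (tt - 1 - j) ≤ (r : ℤ) * v (tt - 1 - j) :=
      mul_le_mul_of_nonneg_right hprz hvc.le
    linarith
  rw [Tseg_succ hj]
  unfold chainG
  simp only
  linarith

lemma chainG_extra_nonneg (hvpos : ∀ i, i < tt → 0 < v i)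
    {j w : ℕ} (hj : j ≤ tt) (hw : w < sigmaFn r β tt j) :
    (r : ℤ) * Tseg tt v j ≤ chainG r tt v (j, w) := by
  unfold chainG
  simp only
  by_cases hjtt : j = tt
  · subst hjtt
    have hw0 : w = 0 := by have := sigmaFn_tt_le_one r β j; omega
    subst hw0
    norm_num
  · have hjlt : j < tt := by omega
    have h1 : (0 : ℤ) ≤ ((w / (tt - j) : ℕ) : ℤ) * v (tt - 1 - j) :=
      mul_nonneg (by positivity) (hvpos _ (by omega)).le
    have h2 : (0 : ℤ) ≤ (if w % (tt - j) = 0 then (0 : ℤ) else v (w % (tt - j) - 1)) := by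
      have hmlt : w % (tt - j) < tt - j := Nat.mod_lt _ (by omega)
      split_ifs with h
      · exact le_rfl
      · exact (hvpos _ (by omega)).le
    linarith

lemma chainG_lt (hvpos : ∀ i, i < tt → 0 < v i)
    (hvmono : ∀ i j, i < j → j < tt → v i < v j)
    {j w j' w' : ℕ} (hj : j ≤ tt) (hw : w < sigmaFn r β tt j)
    (hj' : j' ≤ tt) (hw' : w' < sigmaFn r β tt j')
    (hlex : j < j' ∨ (j = j' ∧ w < w')) :
    chainG r tt v (j, w) < chainG r tt v (j', w') := by
  rcases hlex with h | ⟨rfl, hww⟩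
  · have hjlt : j < tt := by omega
    have h1 : chainG r tt v (j, w) < (r : ℤ) * Tseg tt v (j + 1) :=
      chainG_lt_top hvpos hvmono hjlt (lt_of_lt_of_le hw (sigmaFn_le hjlt))
    have h2 : (r : ℤ) * Tseg tt v (j + 1) ≤ (r : ℤ) * Tseg tt v j' :=
      mul_le_mul_of_nonneg_left (Tseg_mono hvpos (by omega)) (by positivity)
    have h3 := chainG_extra_nonneg (r := r) (β := β) hvpos hj' hw'
    linarith
  · -- same level
    have hjlt : j < tt := by
      by_contra hc
      have hjeq : j = tt := by omega
      subst hjeq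
      have := sigmaFn_tt_le_one r β j
      omega
    have hd : 0 < tt - j := by omega
    have hppp : w / (tt - j) ≤ w' / (tt - j) := Nat.div_le_div_right hww.le
    have hiw : (tt - j) * (w / (tt - j)) + w % (tt - j) = w := Nat.div_add_mod w (tt - j)
    have hiw' : (tt - j) * (w' / (tt - j)) + w' % (tt - j) = w' := Nat.div_add_mod w' (tt - j)
    have hi'd : w' % (tt - j) < tt - j := Nat.mod_lt _ hd
    have hid : w % (tt - j) < tt - j := Nat.mod_lt _ hd
    unfold chainG
    simp only
    rcases eq_or_lt_of_le hppp with hpe | hpl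
    · -- same p, i < i'
      rw [hpe] at hiw
      have hii : w % (tt - j) < w' % (tt - j) := by omega
      rw [← hpe]
      have hlads : (if w % (tt - j) = 0 then (0 : ℤ) else v (w % (tt - j) - 1)) <
          (if w' % (tt - j) = 0 then (0 : ℤ) else v (w' % (tt - j) - 1)) := by
        rw [if_neg (by omega : ¬ w' % (tt - j) = 0)]
        split_ifs with h
        · exact hvpos _ (by omega)
        · exact hvmono _ _ (by omega) (by omega)
      linarith
    · -- p < p'
      have hvc : 0 < v (tt - 1 - j) := hvpos _ (by omega)
      have hlad : (if w % (tt - j) = 0 then (0 : ℤ) else v (w % (tt - j) - 1)) < v (tt - 1 - j) :=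
        lad_lt_vc hvpos hvmono hjlt hid
      have hlad' : (0 : ℤ) ≤ (if w' % (tt - j) = 0 then (0 : ℤ) else v (w' % (tt - j) - 1)) := by
        split_ifs with h
        · exact le_rfl
        · exact (hvpos _ (by omega)).le
      have hplz : ((w / (tt - j) : ℕ) : ℤ) + 1 ≤ ((w' / (tt - j) : ℕ) : ℤ) := by
        exact_mod_cast hpl
      have h2 : (((w / (tt - j) : ℕ) : ℤ) + 1) * v (tt - 1 - j)
          ≤ ((w' / (tt - j) : ℕ) : ℤ) * v (tt - 1 - j) :=
        mul_le_mul_of_nonneg_right hplz hvc.le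
      have hexp : (((w / (tt - j) : ℕ) : ℤ) + 1) * v (tt - 1 - j)
          = ((w / (tt - j) : ℕ) : ℤ) * v (tt - 1 - j) + v (tt - 1 - j) := by ring
      linarith [hlad, hlad', h2, hexp]

lemma chainG_zero : chainG r tt v (0, 0) = 0 := by
  unfold chainG Tseg
  simp


lemma chainG_mem {W : Finset ℤ} {r β tt : ℕ} {v : ℕ → ℤ} (hr : 1 ≤ r)
    (hmem : ∀ g : ℕ → ℕ, (∀ u, g u ≤ r) → (∑ u ∈ Finset.range tt, g u) ≤ β →
      (∑ u ∈ Finset.range tt, (g u : ℤ) * v u) ∈ W)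
    {j w : ℕ} (hj : j ≤ tt) (hw : w < sigmaFn r β tt j) :
    chainG r tt v (j, w) ∈ W := by
  classical
  have hjtt : j = tt → (w = 0 ∧ r * tt ≤ β) := by
    intro h
    subst h
    unfold sigmaFn at hw
    rw [if_pos rfl] at hw
    constructor
    · split_ifs at hw <;> omega
    · by_contra hc
      rw [if_neg hc] at hw
      omega
  have hp_lt : j < tt → w / (tt - j) < r := by
    intro hjlt
    have h1 : w < r * (tt - j) := lt_of_lt_of_le hw (sigmaFn_le hjlt)
    exact (Nat.div_lt_iff_lt_mul (by omega)).mpr (by omega)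
  have hiltd : j < tt → w % (tt - j) < tt - j := fun h => Nat.mod_lt _ (by omega)
  -- the term-count bound
  have hterms : r * j + (if j < tt then w / (tt - j) else 0) +
      (if w % (tt - j) = 0 then 0 else 1) ≤ β := by
    by_cases hc1 : j = tt
    · obtain ⟨hw0, hrt⟩ := hjtt hc1
      subst hw0
      subst hc1
      simp
      omega
    · have hjlt : j < tt := by omega
      rw [if_pos hjlt]
      by_cases hc2 : r * (j + 1) ≤ β
      · have h1 := hp_lt hjlt
        have h2 : r * (j + 1) = r * j + r := by ring
        split_ifs <;> omega
      · have hσeq : sigmaFn r β tt j = min (r * (tt - j)) (β + 1 - r * j) := by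
          unfold sigmaFn
          rw [if_neg (by omega : ¬ j = tt), if_neg hc2]
        rw [hσeq] at hw
        have hwle : w < β + 1 - r * j := lt_of_lt_of_le hw (min_le_right _ _)
        have hrjβ : r * j ≤ β := by omega
        rcases Nat.eq_zero_or_pos w with hw0 | hwpos
        · subst hw0
          simp
          omega
        · have hpi : w / (tt - j) + (if w % (tt - j) = 0 then 0 else 1) ≤ w := by
            by_cases hi0 : w % (tt - j) = 0
            · rw [if_pos hi0]
              have := Nat.div_le_self w (tt - j)
              omega
            · rw [if_neg hi0]
              have hd2 : 2 ≤ tt - j := by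
                have h1 := hiltd hjlt
                omega
              have h3 : w / (tt - j) ≤ w / 2 := Nat.div_le_div_left hd2 (by omega)
              omega
          omega
  -- the multiplicity pattern
  set g : ℕ → ℕ := fun u =>
    (if tt - j ≤ u then r else 0) + (if j < tt ∧ u = tt - 1 - j then w / (tt - j) else 0) +
      (if w % (tt - j) ≠ 0 ∧ u = w % (tt - j) - 1 then 1 else 0) with hgdef
  have hg_le : ∀ u, g u ≤ r := by
    intro u
    simp only [hgdef]
    by_cases h1 : tt - j ≤ u
    · have e2 : ¬ (j < tt ∧ u = tt - 1 - j) := by rintro ⟨a, b⟩; omega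
      have e3 : ¬ (w % (tt - j) ≠ 0 ∧ u = w % (tt - j) - 1) := by
        rintro ⟨a, b⟩
        have hjlt : j < tt := by
          by_contra hh
          have h4 := hjtt (by omega)
          have : w % (tt - j) = 0 := by
            have := h4.1
            subst this
            simp
          exact a this
        have := hiltd hjlt
        omega
      rw [if_pos h1, if_neg e2, if_neg e3]
      omega
    · rw [if_neg h1]
      by_cases h2 : j < tt ∧ u = tt - 1 - j
      · have e3 : ¬ (w % (tt - j) ≠ 0 ∧ u = w % (tt - j) - 1) := by
          rintro ⟨a, b⟩
          have := hiltd h2.1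
          omega
        rw [if_pos h2, if_neg e3]
        have := hp_lt h2.1
        omega
      · rw [if_neg h2]
        split_ifs <;> omega
  have hg_sum : ∑ u ∈ Finset.range tt, g u ≤ β := by
    have hsplit : ∑ u ∈ Finset.range tt, g u =
        (∑ u ∈ Finset.range tt, (if tt - j ≤ u then r else 0)) +
        (∑ u ∈ Finset.range tt, (if j < tt ∧ u = tt - 1 - j then w / (tt - j) else 0)) +
        (∑ u ∈ Finset.range tt, (if w % (tt - j) ≠ 0 ∧ u = w % (tt - j) - 1 then 1 else 0)) := by
      simp only [hgdef]
      rw [Finset.sum_add_distrib, Finset.sum_add_distrib]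
    have h1 : ∑ u ∈ Finset.range tt, (if tt - j ≤ u then r else 0) = r * j := by
      have hfe : (Finset.range tt).filter (fun u => tt - j ≤ u) = Finset.Ico (tt - j) tt := by
        ext u
        simp only [Finset.mem_filter, Finset.mem_range, Finset.mem_Ico]
        omega
      rw [Finset.sum_ite, Finset.sum_const, Finset.sum_const_zero, add_zero, hfe]
      rw [Nat.card_Ico]
      have : tt - (tt - j) = j := by omega
      rw [this, smul_eq_mul, mul_comm]
    have h2 : ∑ u ∈ Finset.range tt, (if j < tt ∧ u = tt - 1 - j then w / (tt - j) else 0)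
        = if j < tt then w / (tt - j) else 0 := by
      by_cases hjlt : j < tt
      · simp only [hjlt, true_and, if_pos]
        rw [Finset.sum_ite_eq' (Finset.range tt) (tt - 1 - j) (fun _ => w / (tt - j))]
        rw [if_pos (Finset.mem_range.mpr (by omega))]
      · simp [hjlt]
    have h3 : ∑ u ∈ Finset.range tt, (if w % (tt - j) ≠ 0 ∧ u = w % (tt - j) - 1 then 1 else 0)
        = if w % (tt - j) = 0 then 0 else 1 := by
      by_cases hi0 : w % (tt - j) = 0
      · simp [hi0]
      · have hjlt : j < tt := by
          by_contra hh
          have h4 := hjtt (by omega)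
          have : w % (tt - j) = 0 := by
            have := h4.1
            subst this
            simp
          exact hi0 this
        simp only [hi0, ne_eq, not_false_eq_true, true_and, if_neg]
        rw [Finset.sum_ite_eq' (Finset.range tt) (w % (tt - j) - 1) (fun _ => 1)]
        have hin : w % (tt - j) - 1 ∈ Finset.range tt := by
          have := hiltd hjlt
          exact Finset.mem_range.mpr (by omega)
        rw [if_pos hin]
    rw [hsplit, h1, h2, h3]
    exact hterms
  have hval : ∑ u ∈ Finset.range tt, (g u : ℤ) * v u = chainG r tt v (j, w) := by
    have hsplit : ∀ u, u ∈ Finset.range tt → ((g u : ℕ) : ℤ) * v u =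
        (if tt - j ≤ u then (r : ℤ) * v u else 0) +
        (if j < tt ∧ u = tt - 1 - j then ((w / (tt - j) : ℕ) : ℤ) * v u else 0) +
        (if w % (tt - j) ≠ 0 ∧ u = w % (tt - j) - 1 then v u else 0) := by
      intro u _
      simp only [hgdef]
      push_cast
      split_ifs <;> ring
    rw [Finset.sum_congr rfl hsplit, Finset.sum_add_distrib, Finset.sum_add_distrib]
    have h1 : ∑ u ∈ Finset.range tt, (if tt - j ≤ u then (r : ℤ) * v u else 0)
        = (r : ℤ) * Tseg tt v j := by
      have hfe : (Finset.range tt).filter (fun u => tt - j ≤ u) = Finset.Ico (tt - j) tt := by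
        ext u
        simp only [Finset.mem_filter, Finset.mem_range, Finset.mem_Ico]
        omega
      rw [Finset.sum_ite, Finset.sum_const_zero, add_zero, hfe, ← Finset.mul_sum]
      rfl
    have h2 : ∑ u ∈ Finset.range tt, (if j < tt ∧ u = tt - 1 - j then
          ((w / (tt - j) : ℕ) : ℤ) * v u else 0)
        = ((w / (tt - j) : ℕ) : ℤ) * v (tt - 1 - j) := by
      by_cases hjlt : j < tt
      · simp only [hjlt, true_and]
        rw [Finset.sum_ite_eq' (Finset.range tt) (tt - 1 - j)
          (fun u => ((w / (tt - j) : ℕ) : ℤ) * v u)]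
        rw [if_pos (Finset.mem_range.mpr (by omega))]
      · have h4 := hjtt (by omega)
        have hd0 : tt - j = 0 := by omega
        simp [hjlt, hd0]
    have h3 : ∑ u ∈ Finset.range tt, (if w % (tt - j) ≠ 0 ∧ u = w % (tt - j) - 1 then v u else 0)
        = if w % (tt - j) = 0 then 0 else v (w % (tt - j) - 1) := by
      by_cases hi0 : w % (tt - j) = 0
      · simp [hi0]
      · have hjlt : j < tt := by
          by_contra hh
          have h4 := hjtt (by omega)
          have : w % (tt - j) = 0 := by
            have := h4.1
            subst this
            simp
          exact hi0 this
        simp only [hi0, ne_eq, not_false_eq_true, true_and, if_neg]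
        rw [Finset.sum_ite_eq' (Finset.range tt) (w % (tt - j) - 1) (fun u => v u)]
        have hin : w % (tt - j) - 1 ∈ Finset.range tt := by
          have := hiltd hjlt
          exact Finset.mem_range.mpr (by omega)
        rw [if_pos hin]
    rw [h1, h2, h3]
    rfl
  have := hmem g hg_le hg_sum
  rw [hval] at this
  exact this


lemma side_bound (W : Finset ℤ) (r β tt n e : ℕ)
    (hr : 1 ≤ r) (hβ : β = r * n + e) (he1 : 1 ≤ e) (her : e ≤ r)
    (v : ℕ → ℤ)
    (hvpos : ∀ i, i < tt → 0 < v i)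
    (hvmono : ∀ i j, i < j → j < tt → v i < v j)
    (hmem : ∀ g : ℕ → ℕ, (∀ u, g u ≤ r) → (∑ u ∈ Finset.range tt, g u) ≤ β →
      (∑ u ∈ Finset.range tt, (g u : ℤ) * v u) ∈ W) :
    (if tt ≤ n then (r : ℤ) * tt * (tt + 1)
      else 2 * (r : ℤ) * n * tt - (r : ℤ) * n * (n - 1) + 2 * e - 2)
      ≤ 2 * (((W.filter (fun x => 0 < x)).card : ℤ)) := by
  classical
  set I : Finset (ℕ × ℕ) :=
    (Finset.range (tt + 1)).biUnion
      (fun j => ({j} : Finset ℕ) ×ˢ Finset.range (sigmaFn r β tt j)) with hI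
  have hmemI : ∀ q : ℕ × ℕ, q ∈ I ↔ q.1 ≤ tt ∧ q.2 < sigmaFn r β tt q.1 := by
    intro q
    simp only [hI, Finset.mem_biUnion, Finset.mem_range, Finset.mem_product,
      Finset.mem_singleton]
    constructor
    · rintro ⟨j, hj, hq1, hq2⟩
      subst hq1
      exact ⟨by omega, hq2⟩
    · rintro ⟨h1, h2⟩
      exact ⟨q.1, by omega, rfl, h2⟩
  have hσ0pos : 0 < sigmaFn r β tt 0 := by
    unfold sigmaFn
    by_cases h0 : (0 : ℕ) = tt
    · rw [if_pos h0]
      have : r * tt ≤ β := by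
        rw [← h0]
        omega
      rw [if_pos this]
      omega
    · rw [if_neg h0]
      split_ifs
      · have h1 : 1 ≤ tt := by omega
        calc 0 < r * 1 := by omega
          _ ≤ r * (tt - 0) := by
            apply Nat.mul_le_mul_left
            omega
      · apply lt_min
        · have h1 : 1 ≤ tt := by omega
          calc 0 < r * 1 := by omega
            _ ≤ r * (tt - 0) := by
              apply Nat.mul_le_mul_left
              omega
        · omega
  have h00 : ((0 : ℕ), (0 : ℕ)) ∈ I := (hmemI _).mpr ⟨by omega, hσ0pos⟩
  -- injectivity
  have hltG : ∀ a ∈ I, ∀ b ∈ I, (a.1 < b.1 ∨ (a.1 = b.1 ∧ a.2 < b.2)) →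
      chainG r tt v a < chainG r tt v b := by
    rintro ⟨j, w⟩ ha ⟨j', w'⟩ hb hlex
    obtain ⟨hj, hw⟩ := (hmemI _).mp ha
    obtain ⟨hj', hw'⟩ := (hmemI _).mp hb
    exact chainG_lt hvpos hvmono hj hw hj' hw' hlex
  have hinjG : Set.InjOn (chainG r tt v) ↑(I.erase (0, 0)) := by
    intro a ha b hb hab
    have ha' : a ∈ I := Finset.mem_of_mem_erase ha
    have hb' : b ∈ I := Finset.mem_of_mem_erase hb
    by_contra hne
    have htri : (a.1 < b.1 ∨ (a.1 = b.1 ∧ a.2 < b.2)) ∨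
        (b.1 < a.1 ∨ (b.1 = a.1 ∧ b.2 < a.2)) := by
      rcases Nat.lt_trichotomy a.1 b.1 with h | h | h
      · exact Or.inl (Or.inl h)
      · rcases Nat.lt_trichotomy a.2 b.2 with h2 | h2 | h2
        · exact Or.inl (Or.inr ⟨h, h2⟩)
        · exact absurd (Prod.ext h h2) hne
        · exact Or.inr (Or.inr ⟨h.symm, h2⟩)
      · exact Or.inr (Or.inl h)
    rcases htri with h | h
    · exact absurd hab (ne_of_lt (hltG a ha' b hb' h))
    · exact absurd hab.symm (ne_of_lt (hltG b hb' a ha' h))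
  -- image is inside the positive part of W
  have himg : (I.erase (0, 0)).image (chainG r tt v) ⊆ W.filter (fun x => 0 < x) := by
    intro x hx
    obtain ⟨q, hq, rfl⟩ := Finset.mem_image.mp hx
    have hq' : q ∈ I := Finset.mem_of_mem_erase hq
    obtain ⟨hj, hw⟩ := (hmemI _).mp hq'
    refine Finset.mem_filter.mpr ⟨?_, ?_⟩
    · obtain ⟨j, w⟩ := q
      exact chainG_mem hr hmem hj hw
    · have hne : q ≠ (0, 0) := Finset.ne_of_mem_erase hq
      have hlex : (0 : ℕ) < q.1 ∨ ((0 : ℕ) = q.1 ∧ (0 : ℕ) < q.2) := by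
        rcases Nat.eq_zero_or_pos q.1 with h1 | h1
        · rcases Nat.eq_zero_or_pos q.2 with h2 | h2
          · exact absurd (Prod.ext h1.symm h2.symm).symm hne
          · exact Or.inr ⟨h1.symm, h2⟩
        · exact Or.inl h1
      have := hltG (0, 0) h00 q hq' hlex
      rwa [chainG_zero] at this
  have hcard1 : (I.erase (0, 0)).card ≤ (W.filter (fun x => 0 < x)).card := by
    calc (I.erase (0, 0)).card = ((I.erase (0, 0)).image (chainG r tt v)).card :=
          (Finset.card_image_of_injOn hinjG).symm
      _ ≤ _ := Finset.card_le_card himg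
  have hcardI : I.card = ∑ j ∈ Finset.range (tt + 1), sigmaFn r β tt j := by
    rw [hI, Finset.card_biUnion]
    · apply Finset.sum_congr rfl
      intro j _
      rw [Finset.card_product, Finset.card_singleton, Finset.card_range, one_mul]
    · intro x _ y _ hxy
      simp only [Finset.disjoint_left, Finset.mem_product, Finset.mem_singleton]
      rintro ⟨a, b⟩ ⟨h1, _⟩ ⟨h2, _⟩
      exact hxy (h1.symm.trans h2)
  have hcarde : (I.erase (0, 0)).card = I.card - 1 := Finset.card_erase_of_mem h00
  have hIpos : 1 ≤ I.card := Finset.card_pos.mpr ⟨(0, 0), h00⟩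
  -- now the counting, case split
  by_cases hc : tt ≤ n
  · rw [if_pos hc]
    have hfull : ∀ j, j < tt → sigmaFn r β tt j = r * (tt - j) := by
      intro j hj
      have h1 : r * (j + 1) ≤ β := by
        have : r * (j + 1) ≤ r * n := Nat.mul_le_mul_left r (by omega)
        omega
      unfold sigmaFn
      rw [if_neg (by omega : ¬ j = tt), if_pos h1]
    have htop : sigmaFn r β tt tt = 1 := by
      have h1 : r * tt ≤ β := by
        have : r * tt ≤ r * n := Nat.mul_le_mul_left r hc
        omega
      unfold sigmaFn
      rw [if_pos rfl, if_pos h1]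
    have hsum : ∑ j ∈ Finset.range (tt + 1), sigmaFn r β tt j
        = r * (∑ j ∈ Finset.range tt, (tt - j)) + 1 := by
      rw [Finset.sum_range_succ, htop, Finset.mul_sum]
      congr 1
      exact Finset.sum_congr rfl (fun j hj => hfull j (Finset.mem_range.mp hj))
    have hgauss : 2 * (∑ j ∈ Finset.range tt, (tt - j)) = tt * (tt + 1) := by
      have h1 : ∑ j ∈ Finset.range tt, (tt - j) = ∑ j ∈ Finset.range tt, (j + 1) := by
        rw [← Finset.sum_range_reflect (fun j => j + 1) tt]
        exact Finset.sum_congr rfl fun j hj => by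
          have := Finset.mem_range.mp hj
          omega
      have h2 : ∑ j ∈ Finset.range tt, (j + 1) = ∑ i ∈ Finset.range (tt + 1), i := by
        rw [Finset.sum_range_succ' (fun i => i) tt]
        simp
      have h3 := Finset.sum_range_id_mul_two (tt + 1)
      have h4 : (tt + 1) * (tt + 1 - 1) = tt * (tt + 1) := by
        rw [Nat.add_sub_cancel, Nat.mul_comm]
      rw [h1, h2]
      omega
    have hfin : ((W.filter (fun x => 0 < x)).card : ℤ) ≥
        (r : ℤ) * (∑ j ∈ Finset.range tt, (tt - j) : ℕ) := by
      have h5 : (I.erase (0, 0)).card = r * (∑ j ∈ Finset.range tt, (tt - j)) := by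
        rw [hcarde, hcardI, hsum]
        omega
      have := hcard1
      rw [h5] at this
      exact_mod_cast this
    have hgz : (2 : ℤ) * ((∑ j ∈ Finset.range tt, (tt - j) : ℕ) : ℤ)
        = (tt : ℤ) * (tt + 1) := by exact_mod_cast congrArg (Nat.cast : ℕ → ℤ) hgauss
    have key : (r : ℤ) * tt * (tt + 1)
        = 2 * ((r : ℤ) * ((∑ j ∈ Finset.range tt, (tt - j) : ℕ) : ℤ)) := by
      linear_combination (r : ℤ) * hgz.symm
    rw [key]
    linarith [hfin]
  · rw [if_neg hc]
    push_neg at hc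
    have hfull : ∀ j, j < n → sigmaFn r β tt j = r * (tt - j) := by
      intro j hj
      have h1 : r * (j + 1) ≤ β := by
        have : r * (j + 1) ≤ r * n := Nat.mul_le_mul_left r (by omega)
        omega
      unfold sigmaFn
      rw [if_neg (by omega : ¬ j = tt), if_pos h1]
    have hσn : e ≤ sigmaFn r β tt n := by
      unfold sigmaFn
      rw [if_neg (by omega : ¬ n = tt)]
      by_cases h1 : r * (n + 1) ≤ β
      · rw [if_pos h1]
        calc e ≤ r := her
          _ = r * 1 := by omega
          _ ≤ r * (tt - n) := Nat.mul_le_mul_left r (by omega)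
      · rw [if_neg h1]
        apply le_min
        · calc e ≤ r := her
            _ = r * 1 := by omega
            _ ≤ r * (tt - n) := Nat.mul_le_mul_left r (by omega)
        · omega
    have hsum : r * (∑ j ∈ Finset.range n, (tt - j)) + e
        ≤ ∑ j ∈ Finset.range (tt + 1), sigmaFn r β tt j := by
      have hsub : Finset.range (n + 1) ⊆ Finset.range (tt + 1) :=
        Finset.range_subset_range.mpr (by omega)
      calc r * (∑ j ∈ Finset.range n, (tt - j)) + e
          = (∑ j ∈ Finset.range n, r * (tt - j)) + e := by rw [Finset.mul_sum]
        _ ≤ (∑ j ∈ Finset.range n, sigmaFn r β tt j) + sigmaFn r β tt n := by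
            have heq : ∑ j ∈ Finset.range n, r * (tt - j)
                = ∑ j ∈ Finset.range n, sigmaFn r β tt j :=
              Finset.sum_congr rfl (fun j hj => (hfull j (Finset.mem_range.mp hj)).symm)
            rw [heq]
            omega
        _ = ∑ j ∈ Finset.range (n + 1), sigmaFn r β tt j := by
            rw [Finset.sum_range_succ]
        _ ≤ _ := Finset.sum_le_sum_of_subset hsub
    have hgz : (2 : ℤ) * ((∑ j ∈ Finset.range n, (tt - j) : ℕ) : ℤ)
        = 2 * (n : ℤ) * tt - (n : ℤ) * ((n : ℤ) - 1) := by
      have hcast : ((∑ j ∈ Finset.range n, (tt - j) : ℕ) : ℤ)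
          = ∑ j ∈ Finset.range n, ((tt : ℤ) - (j : ℤ)) := by
        push_cast
        apply Finset.sum_congr rfl
        intro j hj
        have := Finset.mem_range.mp hj
        omega
      rw [hcast, Finset.sum_sub_distrib, Finset.sum_const, Finset.card_range, nsmul_eq_mul]
      have hgid : (∑ j ∈ Finset.range n, (j : ℤ)) * 2 = (n : ℤ) * ((n : ℤ) - 1) := by
        have := Finset.sum_range_id_mul_two n
        have hc2 : ((∑ j ∈ Finset.range n, j : ℕ) : ℤ) * 2 = ((n * (n - 1) : ℕ) : ℤ) := by
          exact_mod_cast congrArg (Nat.cast : ℕ → ℤ) this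
        push_cast at hc2
        rcases Nat.eq_zero_or_pos n with h0 | h0
        · subst h0; simp
        · rw [Nat.cast_sub (by omega)] at hc2
          push_cast at hc2
          linarith [hc2]
      linarith [hgid]
    have hfin : ((W.filter (fun x => 0 < x)).card : ℤ) ≥
        (r : ℤ) * (∑ j ∈ Finset.range n, (tt - j) : ℕ) + (e : ℤ) - 1 := by
      have hIc : r * (∑ j ∈ Finset.range n, (tt - j)) + e ≤ I.card := by
        rw [hcardI]
        exact hsum
      have h5 : r * (∑ j ∈ Finset.range n, (tt - j)) + e - 1 ≤ (I.erase (0, 0)).card := by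
        rw [hcarde]
        omega
      have h6 := le_trans h5 hcard1
      have h7 : 1 ≤ r * (∑ j ∈ Finset.range n, (tt - j)) + e := by omega
      have h8 : ((r * (∑ j ∈ Finset.range n, (tt - j)) + e - 1 : ℕ) : ℤ)
          ≤ ((W.filter (fun x => 0 < x)).card : ℤ) := by exact_mod_cast h6
      rw [Nat.cast_sub h7] at h8
      rw [Nat.cast_add, Nat.cast_mul, Nat.cast_one] at h8
      linarith [h8]
    have key : 2 * (r : ℤ) * n * tt - (r : ℤ) * n * ((n : ℤ) - 1) + 2 * e - 2
        = 2 * ((r : ℤ) * ((∑ j ∈ Finset.range n, (tt - j) : ℕ) : ℤ) + (e : ℤ) - 1) := by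
      linear_combination (r : ℤ) * hgz.symm
    rw [key]
    linarith [hfin]





lemma case4core (n z q w : ℤ) (hn0 : 0 ≤ n) (hnn : 0 ≤ n * (n - 1)) (hz : 3 ≤ z)
    (hq : 4 * q = (2 * n + z) ^ 2 ∨ 4 * q = (2 * n + z) ^ 2 - 1)
    (hw2 : 2 * w = (n + z) * (n + z - 1)) :
    2 * (q - w) ≤ 2 * n ^ 2 + 2 * n * z := by
  rcases hq with hq | hq <;>
    nlinarith [hnn, mul_nonneg hn0 (by linarith : (0 : ℤ) ≤ z),
      mul_nonneg (by linarith : (0 : ℤ) ≤ z) (by linarith : (0 : ℤ) ≤ z - 2)]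

lemma final_arith (r m n e s t u q w : ℤ)
    (hr : 1 ≤ r) (hm1 : 1 ≤ m) (hmk : m ≤ s + t + 1) (hn : n = s + t + 1 - m)
    (he1 : 1 ≤ e) (her : e ≤ r) (hs : 0 ≤ s) (ht : 0 ≤ t) (hk : 3 ≤ s + t + 1)
    (hqu : (s + t + 1 = 2 * u ∧ 4 * q = (s + t + 1) ^ 2) ∨
           (s + t + 1 = 2 * u + 1 ∧ 4 * q = (s + t + 1) ^ 2 - 1))
    (hw2 : 2 * w = m * (m - 1)) :
    2 * r * (q - w) ≤
      (if t ≤ n then r * t * (t + 1) else 2 * r * n * t - r * n * (n - 1) + 2 * e - 2)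
      + (if s ≤ n then r * s * (s + 1) else 2 * r * n * s - r * n * (n - 1) + 2 * e - 2) := by
  have hrn : (0 : ℤ) ≤ r := by linarith
  have hn0 : 0 ≤ n := by omega
  have hmul : ∀ X Y : ℤ, X ≤ Y → r * X ≤ r * Y := fun X Y h =>
    mul_le_mul_of_nonneg_left h hrn
  have h2e : (0 : ℤ) ≤ 2 * e - 2 := by linarith
  by_cases hct : t ≤ n <;> by_cases hcs : s ≤ n
  · rw [if_pos hct, if_pos hcs]
    have hcore : 2 * (q - w) ≤ t * (t + 1) + s * (s + 1) := by
      rcases hqu with ⟨hpar, hq⟩ | ⟨hpar, hq⟩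
      · have hne : s ≠ t := by omega
        have hst : 1 ≤ (s - t) ^ 2 := by
          rcases lt_or_gt_of_ne hne with h | h
          · nlinarith
          · nlinarith
        nlinarith [hst, mul_nonneg (by linarith : (0:ℤ) ≤ m) (by linarith : (0:ℤ) ≤ m - 1)]
      · nlinarith [sq_nonneg (s - t),
          mul_nonneg (by linarith : (0:ℤ) ≤ m) (by linarith : (0:ℤ) ≤ m - 1)]
    calc 2 * r * (q - w) = r * (2 * (q - w)) := by ring
      _ ≤ r * (t * (t + 1) + s * (s + 1)) := hmul _ _ hcore
      _ = r * t * (t + 1) + r * s * (s + 1) := by ring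
  · rw [if_pos hct, if_neg hcs]
    push_neg at hcs
    have hcore : 2 * (q - w) ≤ 2 * n * s - n * (n - 1) + t * (t + 1) := by
      rcases hqu with ⟨hpar, hq⟩ | ⟨hpar, hq⟩
      · nlinarith [sq_nonneg (s - t), mul_nonneg ht (by linarith : (0:ℤ) ≤ s - n - 1),
          mul_nonneg (by linarith : (0:ℤ) ≤ s - t - 1) (by linarith : (0:ℤ) ≤ s - t)]
      · nlinarith [sq_nonneg (s - t), mul_nonneg ht (by linarith : (0:ℤ) ≤ s - n - 1),
          mul_nonneg (by linarith : (0:ℤ) ≤ s - t - 1) (by linarith : (0:ℤ) ≤ s - t)]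
    calc 2 * r * (q - w) = r * (2 * (q - w)) := by ring
      _ ≤ r * (2 * n * s - n * (n - 1) + t * (t + 1)) := hmul _ _ hcore
      _ = r * t * (t + 1) + (2 * r * n * s - r * n * (n - 1)) := by ring
      _ ≤ r * t * (t + 1) + (2 * r * n * s - r * n * (n - 1) + 2 * e - 2) := by linarith
  · rw [if_neg hct, if_pos hcs]
    push_neg at hct
    have hcore : 2 * (q - w) ≤ 2 * n * t - n * (n - 1) + s * (s + 1) := by
      rcases hqu with ⟨hpar, hq⟩ | ⟨hpar, hq⟩
      · nlinarith [sq_nonneg (t - s), mul_nonneg hs (by linarith : (0:ℤ) ≤ t - n - 1),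
          mul_nonneg (by linarith : (0:ℤ) ≤ t - s - 1) (by linarith : (0:ℤ) ≤ t - s)]
      · nlinarith [sq_nonneg (t - s), mul_nonneg hs (by linarith : (0:ℤ) ≤ t - n - 1),
          mul_nonneg (by linarith : (0:ℤ) ≤ t - s - 1) (by linarith : (0:ℤ) ≤ t - s)]
    calc 2 * r * (q - w) = r * (2 * (q - w)) := by ring
      _ ≤ r * (2 * n * t - n * (n - 1) + s * (s + 1)) := hmul _ _ hcore
      _ = r * s * (s + 1) + (2 * r * n * t - r * n * (n - 1)) := by ring
      _ ≤ 2 * r * n * t - r * n * (n - 1) + 2 * e - 2 + r * s * (s + 1) := by linarith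
  · rw [if_neg hct, if_neg hcs]
    push_neg at hct hcs
    have hnn : 0 ≤ n * (n - 1) := by
      rcases eq_or_lt_of_le hn0 with h | h
      · simp [← h]
      · exact mul_nonneg hn0 (by omega)
    have hz3 : 3 ≤ s + t + 1 - 2 * n := by omega
    have hqz : 4 * q = (2 * n + (s + t + 1 - 2 * n)) ^ 2 ∨
        4 * q = (2 * n + (s + t + 1 - 2 * n)) ^ 2 - 1 := by
      rcases hqu with ⟨_, hq⟩ | ⟨_, hq⟩
      · left; rw [hq]; ring_nf
      · right; rw [hq]; ring_nf
    have hwz : 2 * w = (n + (s + t + 1 - 2 * n)) * (n + (s + t + 1 - 2 * n) - 1) := by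
      rw [hw2]
      have hm : m = n + (s + t + 1 - 2 * n) := by omega
      rw [hm]
    have hcore := case4core n (s + t + 1 - 2 * n) q w hn0 hnn hz3 hqz hwz
    calc 2 * r * (q - w) = r * (2 * (q - w)) := by ring
      _ ≤ r * (2 * n ^ 2 + 2 * n * (s + t + 1 - 2 * n)) := hmul _ _ hcore
      _ = (2 * r * n * t - r * n * (n - 1)) + (2 * r * n * s - r * n * (n - 1)) := by ring
      _ ≤ _ := by linarith




lemma reindex_pos {M : Type*} [AddCommMonoid M] (k s t : ℕ) (ht : t = k - (s + 1)) (F : ℕ → M) :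
    ∑ u ∈ Finset.range k, (if s + 1 ≤ u ∧ u < k then F u else 0)
      = ∑ i ∈ Finset.range t, F (s + 1 + i) := by
  have h1 : ∑ u ∈ Finset.range k, (if s + 1 ≤ u ∧ u < k then F u else 0)
      = ∑ u ∈ Finset.Ico (s + 1) k, F u := by
    rw [← Finset.sum_filter]
    apply Finset.sum_congr
    · ext u
      simp only [Finset.mem_filter, Finset.mem_range, Finset.mem_Ico]
      omega
    · intros; rfl
  rw [h1, Finset.sum_Ico_eq_sum_range, ht]

lemma reindex_neg {M : Type*} [AddCommMonoid M] (k s : ℕ) (hs : s ≤ k) (F : ℕ → M) :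
    ∑ u ∈ Finset.range k, (if u < s then F u else 0)
      = ∑ i ∈ Finset.range s, F (s - 1 - i) := by
  have h1 : ∑ u ∈ Finset.range k, (if u < s then F u else 0)
      = ∑ u ∈ Finset.range s, F u := by
    rw [← Finset.sum_filter]
    apply Finset.sum_congr
    · ext u
      simp only [Finset.mem_filter, Finset.mem_range]
      omega
    · intros; rfl
  rw [h1, ← Finset.sum_range_reflect]


end Stmt19

theorem stmt_19 (k r α m : ℕ) (hk : 3 ≤ k) (hr : 1 ≤ r)
    (hα : α ≤ r * k - 1) (hm1 : 1 ≤ m) (hmk : m ≤ k)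
    (hml : (m - 1) * r ≤ α) (hmu : α < m * r)
    (A : Finset ℤ) (hcard : A.card = k) (h0 : (0 : ℤ) ∈ A) :
    ((sigmaSeqAtLeast A r α).card : ℤ) ≥
      (r : ℤ) * ((k : ℤ) ^ 2 / 4 - (m : ℤ) * ((m : ℤ) - 1) / 2) + 1 := by
  classical
  open Stmt19 in
  -- basic numeric facts
  have hmr : (m - 1) * r + r = m * r := by
    cases m with
    | zero => omega
    | succ m' => simp [Nat.succ_sub_one, Nat.succ_mul]
  have hrkm : r * k = r * (k - m) + r * m := by
    rw [← Nat.mul_add, Nat.sub_add_cancel hmk]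
  have hαrk : α < r * k := by
    have : m * r ≤ k * r := Nat.mul_le_mul_right r hmk
    have h2 : k * r = r * k := Nat.mul_comm k r
    omega
  set β := r * k - α with hβdef
  set n := k - m with hndef
  set e := m * r - α with hedef
  have he1 : 1 ≤ e := by omega
  have her : e ≤ r := by omega
  have hβn : β = r * n + e := by
    have h3 : m * r = r * m := Nat.mul_comm m r
    omega
  -- the ordered enumeration of A
  set a : Fin k → ℤ := fun i => A.orderEmbOfFin hcard i with hadef
  have hamem : ∀ i : Fin k, a i ∈ A := fun i => Finset.orderEmbOfFin_mem A hcard i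
  have hstrict : StrictMono a := (A.orderEmbOfFin hcard).strictMono
  obtain ⟨i0, hi0⟩ : ∃ i : Fin k, a i = 0 := by
    have := Finset.range_orderEmbOfFin A hcard
    have h2 : (0 : ℤ) ∈ Set.range (A.orderEmbOfFin hcard) := by
      rw [this]
      exact_mod_cast h0
    obtain ⟨i, hi⟩ := h2
    exact ⟨i, hi⟩
  set s := (i0 : ℕ) with hsdef
  have hsk : s < k := i0.isLt
  set t := k - 1 - s with htdef
  have hst : s + t = k - 1 := by omega
  -- ℕ-indexed values
  set a' : ℕ → ℤ := fun u => if h : u < k then a ⟨u, h⟩ else 0 with ha'def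
  have ha'mem : ∀ u, u < k → a' u ∈ A := by
    intro u hu
    simp only [ha'def, dif_pos hu]
    exact hamem _
  have ha'mono : ∀ u v', u < v' → v' < k → a' u < a' v' := by
    intro u v' huv hv
    simp only [ha'def, dif_pos hv, dif_pos (by omega : u < k)]
    exact hstrict (by exact_mod_cast huv)
  have ha'inj : ∀ u v', u < k → v' < k → a' u = a' v' → u = v' := by
    intro u v' hu hv heq
    by_contra hne
    rcases Nat.lt_or_ge u v' with h | h
    · exact absurd heq (ne_of_lt (ha'mono u v' h hv))
    · have : v' < u := by omega
      exact absurd heq.symm (ne_of_lt (ha'mono v' u this hu))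
  have ha's : a' s = 0 := by
    simp only [ha'def, dif_pos hsk]
    convert hi0
  have ha'pos : ∀ u, s < u → u < k → 0 < a' u := by
    intro u h1 h2
    rw [← ha's]
    exact ha'mono s u h1 h2
  have ha'neg : ∀ u, u < s → a' u < 0 := by
    intro u h1
    rw [← ha's]
    exact ha'mono u s h1 hsk
  set W := Wlow A r β with hWdef
  have hW0 : (0 : ℤ) ∈ W := by
    refine mem_Wlow.mpr ⟨0, ?_, ?_, ?_⟩
    · exact zero_le
    · simp
    · simp
  -- positive side
  set vpos : ℕ → ℤ := fun i => a' (s + 1 + i) with hvposdef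
  have hvpos1 : ∀ i, i < t → 0 < vpos i := by
    intro i hi
    exact ha'pos _ (by omega) (by omega)
  have hvpos2 : ∀ i j, i < j → j < t → vpos i < vpos j := by
    intro i j hij hj
    exact ha'mono _ _ (by omega) (by omega)
  have hmem_pos : ∀ g : ℕ → ℕ, (∀ u, g u ≤ r) → (∑ u ∈ Finset.range t, g u) ≤ β →
      (∑ u ∈ Finset.range t, (g u : ℤ) * vpos u) ∈ W := by
    intro g hg hgs
    set G' : ℕ → ℕ := fun u => if s + 1 ≤ u ∧ u < k then g (u - (s + 1)) else 0 with hG'def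
    have hG'le : ∀ u, G' u ≤ r := by
      intro u
      simp only [hG'def]
      split_ifs
      · exact hg _
      · omega
    have hsum1 : ∑ u ∈ Finset.range k, G' u = ∑ i ∈ Finset.range t, g i := by
      simp only [hG'def]
      rw [reindex_pos k s t (by omega) (fun u => g (u - (s + 1)))]
      apply Finset.sum_congr rfl
      intro i _
      congr 1
      omega
    have hval : ∑ u ∈ Finset.range k, (G' u : ℤ) * a' u
        = ∑ i ∈ Finset.range t, (g i : ℤ) * vpos i := by
      have hper : ∀ u, (G' u : ℤ) * a' u
          = if s + 1 ≤ u ∧ u < k then (g (u - (s + 1)) : ℤ) * a' u else 0 := by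
        intro u
        simp only [hG'def]
        split_ifs <;> simp
      rw [Finset.sum_congr rfl (fun u _ => hper u),
        reindex_pos k s t (by omega) (fun u => (g (u - (s + 1)) : ℤ) * a' u)]
      apply Finset.sum_congr rfl
      intro i _
      have : s + 1 + i - (s + 1) = i := by omega
      rw [this]
    rw [← hval]
    exact sum_mem_Wlow a' ha'mem ha'inj G' hG'le (by omega)
  have hposbound := side_bound W r β t n e hr hβn he1 her vpos hvpos1 hvpos2 hmem_pos
  -- negative side
  set W' := W.image (fun x => -x) with hW'def
  set vneg : ℕ → ℤ := fun i => -(a' (s - 1 - i)) with hvnegdef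
  have hvneg1 : ∀ i, i < s → 0 < vneg i := by
    intro i hi
    simp only [hvnegdef, Left.nonneg_neg_iff]
    have := ha'neg (s - 1 - i) (by omega)
    linarith
  have hvneg2 : ∀ i j, i < j → j < s → vneg i < vneg j := by
    intro i j hij hj
    simp only [hvnegdef]
    have := ha'mono (s - 1 - j) (s - 1 - i) (by omega) (by omega)
    linarith
  have hmem_neg : ∀ g : ℕ → ℕ, (∀ u, g u ≤ r) → (∑ u ∈ Finset.range s, g u) ≤ β →
      (∑ u ∈ Finset.range s, (g u : ℤ) * vneg u) ∈ W' := by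
    intro g hg hgs
    set G'' : ℕ → ℕ := fun u => if u < s then g (s - 1 - u) else 0 with hG''def
    have hG''le : ∀ u, G'' u ≤ r := by
      intro u
      simp only [hG''def]
      split_ifs
      · exact hg _
      · omega
    have hsum1 : ∑ u ∈ Finset.range k, G'' u = ∑ i ∈ Finset.range s, g i := by
      simp only [hG''def]
      rw [reindex_neg k s (by omega) (fun u => g (s - 1 - u))]
      apply Finset.sum_congr rfl
      intro i hi
      congr 1
      have := Finset.mem_range.mp hi
      omega
    have hval : ∑ u ∈ Finset.range k, (G'' u : ℤ) * a' u
        = ∑ i ∈ Finset.range s, (g i : ℤ) * a' (s - 1 - i) := by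
      have hper : ∀ u, (G'' u : ℤ) * a' u
          = if u < s then (g (s - 1 - u) : ℤ) * a' u else 0 := by
        intro u
        simp only [hG''def]
        split_ifs <;> simp
      rw [Finset.sum_congr rfl (fun u _ => hper u),
        reindex_neg k s (by omega) (fun u => (g (s - 1 - u) : ℤ) * a' u)]
      apply Finset.sum_congr rfl
      intro i hi
      have := Finset.mem_range.mp hi
      have h5 : s - 1 - (s - 1 - i) = i := by omega
      rw [h5]
    have hin : ∑ i ∈ Finset.range s, (g i : ℤ) * a' (s - 1 - i) ∈ W := by
      rw [← hval]
      exact sum_mem_Wlow a' ha'mem ha'inj G'' hG''le (by omega)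
    have hneg : ∑ u ∈ Finset.range s, (g u : ℤ) * vneg u
        = -(∑ i ∈ Finset.range s, (g i : ℤ) * a' (s - 1 - i)) := by
      rw [← Finset.sum_neg_distrib]
      apply Finset.sum_congr rfl
      intro i _
      simp only [hvnegdef]
      ring
    rw [hneg]
    exact Finset.mem_image.mpr ⟨_, hin, rfl⟩
  have hnegbound := side_bound W' r β s n e hr hβn he1 her vneg hvneg1 hvneg2 hmem_neg
  -- transfer negative-side count back to W
  have hcardneg : ((W'.filter (fun x => 0 < x)).card : ℤ)
      ≤ ((W.filter (fun x => x < 0)).card : ℤ) := by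
    have hsub : (W'.filter (fun x => 0 < x)).image (fun x => -x)
        ⊆ W.filter (fun x => x < 0) := by
      intro y hy
      obtain ⟨x, hx, rfl⟩ := Finset.mem_image.mp hy
      obtain ⟨hx1, hx2⟩ := Finset.mem_filter.mp hx
      obtain ⟨z, hz, rfl⟩ := Finset.mem_image.mp hx1
      refine Finset.mem_filter.mpr ⟨by simpa using hz, by linarith⟩
    have hcd : ((W'.filter (fun x => 0 < x)).image (fun x => -x)).card
        = (W'.filter (fun x => 0 < x)).card :=
      Finset.card_image_of_injective _ neg_injective
    exact_mod_cast hcd ▸ Finset.card_le_card hsub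
  -- combine counts
  have hWcard : ((W.filter (fun x => 0 < x)).card : ℤ)
      + ((W.filter (fun x => x < 0)).card : ℤ) + 1 ≤ (W.card : ℤ) := by
    have hsplit := Finset.card_filter_add_card_filter_not
      (s := W) (p := fun x => 0 < x)
    have h0mem : (0 : ℤ) ∈ W.filter (fun x => ¬ 0 < x) :=
      Finset.mem_filter.mpr ⟨hW0, by simp⟩
    have hsubn : insert (0 : ℤ) (W.filter (fun x => x < 0))
        ⊆ W.filter (fun x => ¬ 0 < x) := by
      intro x hx
      rcases Finset.mem_insert.mp hx with rfl | hx
      · exact h0mem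
      · obtain ⟨h1, h2⟩ := Finset.mem_filter.mp hx
        exact Finset.mem_filter.mpr ⟨h1, by linarith⟩
    have hnotin : (0 : ℤ) ∉ W.filter (fun x => x < 0) := by
      intro hxx
      have := (Finset.mem_filter.mp hxx).2
      omega
    have hcins := Finset.card_insert_of_notMem hnotin
    have hle := Finset.card_le_card hsubn
    have : (W.filter (fun x => x < 0)).card + 1 ≤ (W.filter (fun x => ¬ 0 < x)).card := by
      omega
    have h9 : (W.filter (fun x => 0 < x)).card + ((W.filter (fun x => x < 0)).card + 1)
        ≤ W.card := by omega
    exact_mod_cast h9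
  have hWsigma : (W.card : ℤ) ≤ ((sigmaSeqAtLeast A r α).card : ℤ) := by
    have := card_Wlow_le (A := A) (r := r) (α := α) (β := β) (by rw [hcard])
      (by rw [hcard]; omega)
    exact_mod_cast this
  -- now the arithmetic
  set q : ℤ := (k : ℤ) ^ 2 / 4 with hqdef
  set w : ℤ := (m : ℤ) * ((m : ℤ) - 1) / 2 with hwdef
  have hw2 : 2 * w = (m : ℤ) * ((m : ℤ) - 1) := by
    have hdvd : (2 : ℤ) ∣ (m : ℤ) * ((m : ℤ) - 1) := by
      have hev : Even (((m : ℤ) - 1) * (((m : ℤ) - 1) + 1)) := Int.even_mul_succ_self _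
      have : ((m : ℤ) - 1) * (((m : ℤ) - 1) + 1) = (m : ℤ) * ((m : ℤ) - 1) := by ring
      rw [this] at hev
      exact hev.two_dvd
    exact Int.mul_ediv_cancel' hdvd
  obtain ⟨u, hqu⟩ : ∃ u : ℤ, ((s : ℤ) + t + 1 = 2 * u ∧ 4 * q = ((s : ℤ) + t + 1) ^ 2) ∨
      ((s : ℤ) + t + 1 = 2 * u + 1 ∧ 4 * q = ((s : ℤ) + t + 1) ^ 2 - 1) := by
    have hkst : ((s : ℤ) + t + 1) = (k : ℤ) := by
      have : s + t + 1 = k := by omega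
      exact_mod_cast this
    rcases Nat.even_or_odd k with ⟨u, hu⟩ | ⟨u, hu⟩
    · refine ⟨(u : ℤ), Or.inl ⟨by rw [hkst]; exact_mod_cast (by omega : k = 2 * u), ?_⟩⟩
      have hk2 : (k : ℤ) = 2 * u := by exact_mod_cast (by omega : k = 2 * u)
      have h1 : (k : ℤ) ^ 2 = 4 * (u : ℤ) ^ 2 := by rw [hk2]; ring
      have h2 : q = (u : ℤ) ^ 2 := by
        rw [hqdef, h1]
        exact Int.mul_ediv_cancel_left _ (by norm_num)
      rw [hkst, h2, h1]
    · refine ⟨(u : ℤ), Or.inr ⟨by rw [hkst]; exact_mod_cast hu, ?_⟩⟩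
      have hk2 : (k : ℤ) = 2 * u + 1 := by exact_mod_cast hu
      have h1 : (k : ℤ) ^ 2 = 1 + ((u : ℤ) ^ 2 + u) * 4 := by rw [hk2]; ring
      have h2 : q = (u : ℤ) ^ 2 + u := by
        rw [hqdef, h1, Int.add_mul_ediv_right _ _ (by norm_num : (4 : ℤ) ≠ 0)]
        norm_num
      rw [hkst, h2, h1]
      ring
  have harith := final_arith (r : ℤ) (m : ℤ) (n : ℤ) (e : ℤ) (s : ℤ) (t : ℤ) u q w
    (by exact_mod_cast hr) (by exact_mod_cast hm1)
    (by push_cast; omega) (by push_cast; omega)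
    (by exact_mod_cast he1) (by exact_mod_cast her)
    (by positivity) (by positivity) (by push_cast; omega)
    hqu hw2
  -- put it together
  have hift : (if (t : ℤ) ≤ (n : ℤ) then (r : ℤ) * t * (t + 1)
      else 2 * (r : ℤ) * n * t - (r : ℤ) * n * ((n : ℤ) - 1) + 2 * e - 2)
      ≤ 2 * ((W.filter (fun x => 0 < x)).card : ℤ) := by
    by_cases hc : t ≤ n
    · rw [if_pos (by exact_mod_cast hc)]
      rw [if_pos hc] at hposbound
      exact_mod_cast hposbound
    · rw [if_neg (by exact_mod_cast hc)]
      rw [if_neg hc] at hposbound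
      exact hposbound
  have hifs : (if (s : ℤ) ≤ (n : ℤ) then (r : ℤ) * s * (s + 1)
      else 2 * (r : ℤ) * n * s - (r : ℤ) * n * ((n : ℤ) - 1) + 2 * e - 2)
      ≤ 2 * ((W.filter (fun x => x < 0)).card : ℤ) := by
    by_cases hc : s ≤ n
    · rw [if_pos (by exact_mod_cast hc)]
      rw [if_pos hc] at hnegbound
      linarith [hnegbound, hcardneg]
    · rw [if_neg (by exact_mod_cast hc)]
      rw [if_neg hc] at hnegbound
      linarith [hnegbound, hcardneg]
  linarith [harith, hift, hifs, hWcard, hWsigma]
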